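/- Let ρ(p) = p |GHZ⟩⟨GHZ| + ((1−p)/4) |0⟩⟨0|⊗I₄ with |GHZ⟩ = (1/√2)(|000⟩ + |111⟩), 0 < p ≤ 1, and let F_A = diag(x,1), F_B = diag(y,1), F_C = diag(z,1) with x, y, z > 0. Set N = p/2 + ((1−p)/4)x² + ((1−p)/4)x²y² + ((1−p)/4)x²z² + ((1+p)/4)x²y²z² and D = −p/2 + ((1−p)/4)x² − ((1−p)/4)x²y² − ((1−p)/4)x²z² + ((1+p)/4)x²y²z². Then N = tr[(F_A⊗F_B⊗F_C) ρ(p) (F_A⊗F_B⊗F_C)†], and the 3×9 matrix M̃ with entries M̃_{m,(l,n)} = tr[ρ(p)(F_A σ_l F_A ⊗ F_B σ_m F_B ⊗ F_C σ_n F_C)] has exactly the nonzero entries M̃_{111} = pxyz, M̃_{122} = M̃_{212} = M̃_{221} = −pxyz, M̃_{333} = D (indices M̃_{lmn}), and the eigenvalues of M̃ M̃ᵀ are 2p²x²y²z², 2p²x²y²z², D²; hence the correlation matrix of the filtered state ρ' = (F_A⊗F_B⊗F_C) ρ(p) (F_A⊗F_B⊗F_C)†/N has singular values √2 pxyz/N,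 √2 pxyz/N, |D|/N. -/

import Mathlib

open Matrix Polynomial
open scoped Kronecker ComplexOrder

/-- The Pauli matrices σ₁, σ₂, σ₃ (indexed by `Fin 3`). -/
noncomputable def pauli : Fin 3 → Matrix (Fin 2) (Fin 2) ℂ :=
  ![!![0, 1; 1, 0], !![0, -Complex.I; Complex.I, 0], !![1, 0; 0, -1]]

/-- The correlation matrix of a three-qubit state: `M_{j,(i,k)} = tr[ρ(σ_i⊗σ_j⊗σ_k)]`. -/
noncomputable def corrMat (ρ : Matrix (Fin 2 × Fin 2 × Fin 2) (Fin 2 × Fin 2 × Fin 2) ℂ) :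
    Matrix (Fin 3) (Fin 3 × Fin 3) ℝ :=
  fun j ik => ((ρ * (pauli ik.1 ⊗ₖ (pauli j ⊗ₖ pauli ik.2))).trace).re

/-- The vector `|GHZ⟩ = (|000⟩ + |111⟩)/√2`. -/
noncomputable def ghz : Fin 2 × Fin 2 × Fin 2 → ℂ :=
  fun x => if x = (0, 0, 0) ∨ x = (1, 1, 1) then (((Real.sqrt 2)⁻¹ : ℝ) : ℂ) else 0

/-- The rank-one projector `|0⟩⟨0|`. -/
noncomputable def E00 : Matrix (Fin 2) (Fin 2) ℂ := !![1, 0; 0, 0]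

/-- The state `ρ(p) = p|GHZ⟩⟨GHZ| + ((1-p)/4)|0⟩⟨0| ⊗ I₄`. -/
noncomputable def rhoGHZ (p : ℝ) :
    Matrix (Fin 2 × Fin 2 × Fin 2) (Fin 2 × Fin 2 × Fin 2) ℂ :=
  (p : ℂ) • Matrix.vecMulVec ghz (star ghz)
    + (((1 - p) / 4 : ℝ) : ℂ) • (E00 ⊗ₖ (1 : Matrix (Fin 2 × Fin 2) (Fin 2 × Fin 2) ℂ))

set_option maxHeartbeats 2000000 in
lemma trace_ghz_mul (A B C : Matrix (Fin 2) (Fin 2) ℂ) :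
    (Matrix.vecMulVec ghz (star ghz) * (A ⊗ₖ (B ⊗ₖ C))).trace =
      (1/2 : ℂ) * (A 0 0 * (B 0 0 * C 0 0) + A 1 0 * (B 1 0 * C 1 0)
        + A 0 1 * (B 0 1 * C 0 1) + A 1 1 * (B 1 1 * C 1 1)) := by
  have h2 : ((((Real.sqrt 2)⁻¹ : ℝ) : ℂ)) * (((Real.sqrt 2)⁻¹ : ℝ) : ℂ) = 1/2 := by
    rw [← Complex.ofReal_mul, ← Real.sqrt_inv, Real.mul_self_sqrt (by norm_num)]
    norm_num
  simp only [Matrix.trace, Matrix.diag, Matrix.mul_apply, Fintype.sum_prod_type,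
    Fin.sum_univ_two, Matrix.vecMulVec_apply, ghz, Pi.star_apply,
    kroneckerMap_apply]
  norm_num [Prod.ext_iff]
  ring_nf
  have h2' : ((Real.sqrt 2 : ℝ) : ℂ)⁻¹ ^ 2 = 1/2 := by
    rw [sq]; push_cast at h2 ⊢; exact h2
  rw [h2']; ring

lemma trace_E00_mul (A B C : Matrix (Fin 2) (Fin 2) ℂ) :
    ((E00 ⊗ₖ (1 : Matrix (Fin 2 × Fin 2) (Fin 2 × Fin 2) ℂ)) * (A ⊗ₖ (B ⊗ₖ C))).trace =
      A 0 0 * ((B 0 0 + B 1 1) * (C 0 0 + C 1 1)) := by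
  rw [← Matrix.mul_kronecker_mul, Matrix.trace_kronecker, Matrix.one_mul,
    Matrix.trace_kronecker]
  have : (E00 * A).trace = A 0 0 := by
    simp [Matrix.trace, Matrix.mul_apply, E00, Fin.sum_univ_two, Matrix.diag]
  rw [this]
  simp [Matrix.trace, Fin.sum_univ_two, Matrix.diag, mul_add, add_mul]

lemma trace_rho_mul (p : ℝ) (A B C : Matrix (Fin 2) (Fin 2) ℂ) :
    (rhoGHZ p * (A ⊗ₖ (B ⊗ₖ C))).trace =
      ((p : ℂ)/2) * (A 0 0 * (B 0 0 * C 0 0) + A 1 0 * (B 1 0 * C 1 0)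
        + A 0 1 * (B 0 1 * C 0 1) + A 1 1 * (B 1 1 * C 1 1))
      + (((1-p)/4 : ℝ) : ℂ) * (A 0 0 * ((B 0 0 + B 1 1) * (C 0 0 + C 1 1))) := by
  rw [rhoGHZ, Matrix.add_mul, Matrix.smul_mul, Matrix.smul_mul, trace_add, trace_smul,
    trace_smul, trace_ghz_mul, trace_E00_mul]
  push_cast [smul_eq_mul]
  ring

lemma charpoly_diag3 (a b : ℝ) :
    (!![a,0,0;0,a,0;0,0,b] : Matrix (Fin 3) (Fin 3) ℝ).charpoly
      = (X - C a)^2 * (X - C b) := by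
  rw [Matrix.charpoly, Matrix.det_fin_three]
  simp only [charmatrix_apply, Matrix.diagonal_apply, Matrix.cons_val', Matrix.cons_val_zero,
    Matrix.cons_val_one, Matrix.head_cons, Matrix.empty_val', Matrix.cons_val_fin_one,
    Matrix.vecHead, Matrix.vecTail, Fin.isValue, Matrix.cons_val_two, Matrix.tail_cons,
    show ((0:Fin 3) = 1) = False by simp, show ((0:Fin 3) = 2) = False by simp,
    show ((1:Fin 3) = 0) = False by simp, show ((1:Fin 3) = 2) = False by simp,
    show ((2:Fin 3) = 0) = False by simp, show ((2:Fin 3) = 1) = False by simp,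
    if_true, if_false, eq_self_iff_true, map_zero, sub_zero, zero_sub, Function.comp]
  simp only [Matrix.cons_val_zero, Matrix.cons_val_one, Matrix.cons_val_two, Matrix.head_cons,
    Matrix.tail_cons, Matrix.cons_val', Matrix.empty_val', Matrix.cons_val_fin_one,
    Matrix.of_apply, Matrix.head_fin_const, map_zero]
  ring

set_option maxHeartbeats 4000000 in
/-- Local filtering of `ρ(p)` with filters `diag(x,1), diag(y,1), diag(z,1)`:
the normalization factor, the entries of the filtered matrix `M̃`, the eigenvalues of
`M̃ M̃ᵀ`, and the singular values of the correlation matrix of the filtered state. -/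
theorem filtered_rhoGHZ (p x y z : ℝ) (hp0 : 0 < p) (hp1 : p ≤ 1)
    (hx : 0 < x) (hy : 0 < y) (hz : 0 < z)
    (FA FB FC : Matrix (Fin 2) (Fin 2) ℂ)
    (hFA : FA = Matrix.diagonal ![(x : ℂ), 1])
    (hFB : FB = Matrix.diagonal ![(y : ℂ), 1])
    (hFC : FC = Matrix.diagonal ![(z : ℂ), 1])
    (N D : ℝ)
    (hNdef : N = p / 2 + (1 - p) / 4 * x ^ 2 + (1 - p) / 4 * (x ^ 2 * y ^ 2)
      + (1 - p) / 4 * (x ^ 2 * z ^ 2) + (1 + p) / 4 * (x ^ 2 * y ^ 2 * z ^ 2))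
    (hDdef : D = -(p / 2) + (1 - p) / 4 * x ^ 2 - (1 - p) / 4 * (x ^ 2 * y ^ 2)
      - (1 - p) / 4 * (x ^ 2 * z ^ 2) + (1 + p) / 4 * (x ^ 2 * y ^ 2 * z ^ 2))
    (Mt : Matrix (Fin 3) (Fin 3 × Fin 3) ℝ)
    (hMt : ∀ (m : Fin 3) (l n : Fin 3),
      Mt m (l, n) = ((rhoGHZ p * ((FA * pauli l * FA) ⊗ₖ
        ((FB * pauli m * FB) ⊗ₖ (FC * pauli n * FC)))).trace).re)
    (ρ' : Matrix (Fin 2 × Fin 2 × Fin 2) (Fin 2 × Fin 2 × Fin 2) ℂ)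
    (hρ' : ρ' = ((N : ℂ))⁻¹ • ((FA ⊗ₖ (FB ⊗ₖ FC)) * rhoGHZ p * (FA ⊗ₖ (FB ⊗ₖ FC))ᴴ)) :
    ((FA ⊗ₖ (FB ⊗ₖ FC)) * rhoGHZ p * (FA ⊗ₖ (FB ⊗ₖ FC))ᴴ).trace = (N : ℂ)
    ∧ (∀ l m n : Fin 3,
      Mt m (l, n) =
        if (l, m, n) = (0, 0, 0) then p * x * y * z
        else if (l, m, n) = (0, 1, 1) ∨ (l, m, n) = (1, 0, 1) ∨ (l, m, n) = (1, 1, 0) then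
          -(p * x * y * z)
        else if (l, m, n) = (2, 2, 2) then D
        else 0)
    ∧ (Mt * Mtᵀ).charpoly
        = (X - C (2 * p ^ 2 * x ^ 2 * y ^ 2 * z ^ 2)) ^ 2 * (X - C (D ^ 2))
    ∧ (corrMat ρ' * (corrMat ρ')ᵀ).charpoly
        = (X - C ((Real.sqrt 2 * p * x * y * z / N) ^ 2)) ^ 2 * (X - C ((D / N) ^ 2)) := by
  have hKH : (FA ⊗ₖ (FB ⊗ₖ FC))ᴴ = FA ⊗ₖ (FB ⊗ₖ FC) := by
    subst hFA hFB hFC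
    ext ⟨i1, i2, i3⟩ ⟨j1, j2, j3⟩
    simp only [Matrix.conjTranspose_apply, Matrix.kroneckerMap_apply, Matrix.diagonal_apply]
    fin_cases i1 <;> fin_cases j1 <;> fin_cases i2 <;> fin_cases j2 <;>
      fin_cases i3 <;> fin_cases j3 <;>
      simp [Complex.conj_ofReal]
  have key : ∀ l m n : Fin 3,
      Mt m (l, n) =
        if (l, m, n) = (0, 0, 0) then p * x * y * z
        else if (l, m, n) = (0, 1, 1) ∨ (l, m, n) = (1, 0, 1) ∨ (l, m, n) = (1, 1, 0) then
          -(p * x * y * z)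
        else if (l, m, n) = (2, 2, 2) then D
        else 0 := by
    intro l m n
    rw [hMt, trace_rho_mul, hFA, hFB, hFC]
    fin_cases l <;> fin_cases m <;> fin_cases n <;>
      · simp [pauli, Matrix.mul_apply, Fin.sum_univ_two, Matrix.diagonal, Complex.div_re,
          Prod.ext_iff, hDdef]
        try ring
  have part1 : ((FA ⊗ₖ (FB ⊗ₖ FC)) * rhoGHZ p * (FA ⊗ₖ (FB ⊗ₖ FC))ᴴ).trace = (N : ℂ) := by
    rw [hKH, Matrix.trace_mul_cycle, Matrix.trace_mul_comm, ← Matrix.mul_kronecker_mul,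
      ← Matrix.mul_kronecker_mul, trace_rho_mul]
    rw [hFA, hFB, hFC, hNdef]
    simp only [Matrix.mul_apply, Fin.sum_univ_two, Matrix.diagonal_apply]
    push_cast
    norm_num
    ring
  have hMM : Mt * Mtᵀ = !![2*p^2*x^2*y^2*z^2, 0, 0; 0, 2*p^2*x^2*y^2*z^2, 0; 0, 0, D^2] := by
    ext i j
    rw [Matrix.mul_apply]
    fin_cases i <;> fin_cases j <;>
      · simp [Fintype.sum_prod_type, Fin.sum_univ_three, Matrix.transpose_apply, key,
          Matrix.vecHead, Matrix.vecTail]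
        try ring
  have hN : (0:ℝ) < N := by
    rw [hNdef]
    have h1 : (0:ℝ) ≤ (1 - p) / 4 := by linarith
    have h2 : (0:ℝ) < (1 + p) / 4 := by linarith
    nlinarith [mul_nonneg h1 (sq_nonneg x), mul_nonneg h1 (mul_nonneg (sq_nonneg x) (sq_nonneg y)),
      mul_nonneg h1 (mul_nonneg (sq_nonneg x) (sq_nonneg z)),
      mul_pos h2 (mul_pos (mul_pos (pow_pos hx 2) (pow_pos hy 2)) (pow_pos hz 2))]
  have hcorr : ∀ (j : Fin 3) (ik : Fin 3 × Fin 3), corrMat ρ' j ik = N⁻¹ * Mt j ik := by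
    intro j ⟨i, k⟩
    have : ρ' * (pauli i ⊗ₖ (pauli j ⊗ₖ pauli k)) =
        ((N : ℂ))⁻¹ • ((FA ⊗ₖ (FB ⊗ₖ FC)) * rhoGHZ p * (FA ⊗ₖ (FB ⊗ₖ FC))ᴴ
          * (pauli i ⊗ₖ (pauli j ⊗ₖ pauli k))) := by
      rw [hρ', Matrix.smul_mul]
    have hKPK : (FA ⊗ₖ (FB ⊗ₖ FC)) * (pauli i ⊗ₖ (pauli j ⊗ₖ pauli k)) * (FA ⊗ₖ (FB ⊗ₖ FC))
        = (FA * pauli i * FA) ⊗ₖ ((FB * pauli j * FB) ⊗ₖ (FC * pauli k * FC)) := by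
      rw [← Matrix.mul_kronecker_mul, ← Matrix.mul_kronecker_mul,
        ← Matrix.mul_kronecker_mul, ← Matrix.mul_kronecker_mul]
    have htr : ((FA ⊗ₖ (FB ⊗ₖ FC)) * rhoGHZ p * (FA ⊗ₖ (FB ⊗ₖ FC))ᴴ
          * (pauli i ⊗ₖ (pauli j ⊗ₖ pauli k))).trace
        = (rhoGHZ p * ((FA * pauli i * FA) ⊗ₖ
            ((FB * pauli j * FB) ⊗ₖ (FC * pauli k * FC)))).trace := by
      rw [hKH, ← hKPK]
      rw [show (FA ⊗ₖ (FB ⊗ₖ FC)) * rhoGHZ p * (FA ⊗ₖ (FB ⊗ₖ FC))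
            * (pauli i ⊗ₖ (pauli j ⊗ₖ pauli k))
          = (FA ⊗ₖ (FB ⊗ₖ FC)) * (rhoGHZ p * ((FA ⊗ₖ (FB ⊗ₖ FC))
            * (pauli i ⊗ₖ (pauli j ⊗ₖ pauli k)))) from by simp only [Matrix.mul_assoc]]
      rw [Matrix.trace_mul_comm]
      simp only [Matrix.mul_assoc]
    rw [corrMat]
    simp only [this, trace_smul, htr]
    rw [hMt j i k, ← Complex.ofReal_inv, smul_eq_mul, Complex.re_ofReal_mul]
  have hcorrM : corrMat ρ' * (corrMat ρ')ᵀ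
      = !![(Real.sqrt 2 * p * x * y * z / N)^2, 0, 0;
           0, (Real.sqrt 2 * p * x * y * z / N)^2, 0; 0, 0, (D/N)^2] := by
    have hs2 : Real.sqrt 2 ^ 2 = 2 := Real.sq_sqrt (by norm_num)
    ext i j
    rw [Matrix.mul_apply]
    fin_cases i <;> fin_cases j <;>
      (simp [Fintype.sum_prod_type, Fin.sum_univ_three, Matrix.transpose_apply, hcorr, key,
          div_pow, Matrix.vecHead, Matrix.vecTail];
       try field_simp;
       try linear_combination (-(p^2*x^2*y^2*z^2*N^2)) * hs2;
       try ring;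
       try exact hs2.symm)
  refine ⟨part1, key, ?_, ?_⟩
  · rw [hMM, charpoly_diag3]
  · rw [hcorrM, charpoly_diag3]
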